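/- arXiv:2302.09806 — 3 statements merged into one kernel-verified Lean document; each statement's English description precedes it below -/
import Mathlib

section
/- Let (β_t)_{t≥0} be a monotonically non-increasing sequence in [0,1] and T ≥ 1. With α_t := β_t · ∏_{l=t+1}^{(k+1)T-1} (1 - β_l) and α_(k) := ∑_{t=kT}^{(k+1)T-1} α_t, we have β_{(k+1)T-1} ≤ α_(k) ≤ T · β_{kT} for every k. -/
theorem stmt1 (β : ℕ → ℝ) (hβ : ∀ t, β t ∈ Set.Icc (0:ℝ) 1)
    (hmono : ∀ s t, s ≤ t → β t ≤ β s)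
    (T : ℕ) (hT : 1 ≤ T) (k : ℕ) :
    β ((k+1)*T - 1)
      ≤ (∑ t ∈ Finset.Ico (k*T) ((k+1)*T),
          β t * ∏ l ∈ Finset.Ico (t+1) ((k+1)*T), (1 - β l)) ∧
    (∑ t ∈ Finset.Ico (k*T) ((k+1)*T),
        β t * ∏ l ∈ Finset.Ico (t+1) ((k+1)*T), (1 - β l))
      ≤ (T : ℝ) * β (k*T) := by
  set b := (k+1)*T with hb
  have hb1 : 1 ≤ b := le_trans hT (Nat.le_mul_of_pos_left T (Nat.succ_pos k))
  have hab : k*T < b := by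
    have : k*T + T ≤ b := by simp [hb, add_mul, one_mul]
    omega
  have hprod_nonneg : ∀ t, (0:ℝ) ≤ ∏ l ∈ Finset.Ico (t+1) b, (1 - β l) := by
    intro t
    exact Finset.prod_nonneg fun l _ => by linarith [(hβ l).2]
  have hprod_le_one : ∀ t, (∏ l ∈ Finset.Ico (t+1) b, (1 - β l)) ≤ 1 := by
    intro t
    exact Finset.prod_le_one (fun l _ => by linarith [(hβ l).2])
      (fun l _ => by linarith [(hβ l).1])
  constructor
  · have hmem : b - 1 ∈ Finset.Ico (k*T) b := by
      simp only [Finset.mem_Ico]; omega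
    have key : β (b-1) * ∏ l ∈ Finset.Ico ((b-1)+1) b, (1 - β l) = β (b-1) := by
      have : (b-1)+1 = b := by omega
      rw [this, Finset.Ico_self, Finset.prod_empty, mul_one]
    calc β (b-1) = β (b-1) * ∏ l ∈ Finset.Ico ((b-1)+1) b, (1 - β l) := key.symm
      _ ≤ _ := Finset.single_le_sum
          (fun t _ => mul_nonneg (hβ t).1 (hprod_nonneg t)) hmem
  · have : (∑ t ∈ Finset.Ico (k*T) b, β t * ∏ l ∈ Finset.Ico (t+1) b, (1 - β l))
        ≤ ∑ _t ∈ Finset.Ico (k*T) b, β (k*T) := by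
      apply Finset.sum_le_sum
      intro t ht
      have ht' := (Finset.mem_Ico.mp ht).1
      calc β t * ∏ l ∈ Finset.Ico (t+1) b, (1 - β l)
          ≤ β t * 1 := mul_le_mul_of_nonneg_left (hprod_le_one t) (hβ t).1
        _ = β t := mul_one _
        _ ≤ β (k*T) := hmono _ _ ht'
    calc _ ≤ ∑ _t ∈ Finset.Ico (k*T) b, β (k*T) := this
      _ = (T : ℝ) * β (k*T) := by
          rw [Finset.sum_const, Nat.card_Ico]
          have : b - k*T = T := by rw [hb, add_mul, one_mul]; omega
          rw [this, nsmul_eq_mul]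
end

section
/- Let (β_t)_{t≥0} be a monotonically non-increasing sequence in [0,1] with ∑_t β_t = ∞ and ∑_t β_t² < ∞, and let T ≥ 1. Define α_(k) := 1 - ∏_{t=kT}^{(k+1)T-1} (1 - β_t). Then ∑_{k=0}^∞ α_(k) = ∞ and ∑_{k=0}^∞ α_(k)² < ∞. -/
private lemma one_sub_sum_le_prod (s : Finset ℕ) (f : ℕ → ℝ)
    (hf : ∀ t ∈ s, f t ∈ Set.Icc (0:ℝ) 1) :
    1 - ∑ t ∈ s, f t ≤ ∏ t ∈ s, (1 - f t) := by
  induction s using Finset.induction with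
  | empty => simp
  | @insert a s ha ih =>
    rw [Finset.sum_insert ha, Finset.prod_insert ha]
    have h1 := hf a (Finset.mem_insert_self a s)
    have h2 : 1 - ∑ t ∈ s, f t ≤ ∏ t ∈ s, (1 - f t) :=
      ih fun t ht => hf t (Finset.mem_insert_of_mem ht)
    have h3 : 0 ≤ ∑ t ∈ s, f t :=
      Finset.sum_nonneg fun t ht => (hf t (Finset.mem_insert_of_mem ht)).1
    obtain ⟨h1a, h1b⟩ := h1
    nlinarith

theorem stmt2 (β : ℕ → ℝ) (hβ : ∀ t, β t ∈ Set.Icc (0:ℝ) 1)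
    (hmono : ∀ s t, s ≤ t → β t ≤ β s)
    (hdiv : Filter.Tendsto (fun n => ∑ t ∈ Finset.range n, β t)
      Filter.atTop Filter.atTop)
    (hsq : Summable (fun t => (β t)^2))
    (T : ℕ) (hT : 1 ≤ T) :
    Filter.Tendsto
      (fun n => ∑ k ∈ Finset.range n,
        (1 - ∏ t ∈ Finset.Ico (k*T) ((k+1)*T), (1 - β t)))
      Filter.atTop Filter.atTop ∧
    Summable (fun k => (1 - ∏ t ∈ Finset.Ico (k*T) ((k+1)*T), (1 - β t))^2) := by
  have hTpos : (0:ℝ) < T := by exact_mod_cast hT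
  set α : ℕ → ℝ := fun k => 1 - ∏ t ∈ Finset.Ico (k*T) ((k+1)*T), (1 - β t) with hα
  -- block sum
  have hblock : ∀ k, ∑ t ∈ Finset.Ico (k*T) ((k+1)*T), β t ≤ T * β (k*T) := by
    intro k
    have := Finset.sum_le_card_nsmul (Finset.Ico (k*T) ((k+1)*T)) β (β (k*T))
      (fun t ht => hmono _ _ (Finset.mem_Ico.mp ht).1)
    simpa [Nat.card_Ico, Nat.add_mul, nsmul_eq_mul] using this
  have hup : ∀ k, α k ≤ T * β (k*T) := by
    intro k
    have h := one_sub_sum_le_prod (Finset.Ico (k*T) ((k+1)*T)) β (fun t _ => hβ t)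
    have := hblock k
    simp only [hα]
    linarith
  have hlow : ∀ k, β (k*T) ≤ α k := by
    intro k
    have hlt : k*T < (k+1)*T :=
      (Nat.mul_lt_mul_right (by omega : 0 < T)).mpr (Nat.lt_succ_self k)
    rw [show α k = 1 - ∏ t ∈ Finset.Ico (k*T) ((k+1)*T), (1 - β t) from rfl,
      Finset.prod_eq_prod_Ico_succ_bot hlt]
    have hprod : ∏ t ∈ Finset.Ico (k*T+1) ((k+1)*T), (1 - β t) ≤ 1 :=
      Finset.prod_le_one (fun t _ => by linarith [(hβ t).2]) (fun t _ => by linarith [(hβ t).1])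
    obtain ⟨hβ1, hβ2⟩ := hβ (k*T)
    have hpn : (0:ℝ) ≤ ∏ t ∈ Finset.Ico (k*T+1) ((k+1)*T), (1 - β t) :=
      Finset.prod_nonneg (fun t _ => by linarith [(hβ t).2])
    nlinarith
  have hαnn : ∀ k, 0 ≤ α k := fun k => le_trans (hβ (k*T)).1 (hlow k)
  constructor
  · -- divergence
    have hsum_blocks : ∀ n, ∑ k ∈ Finset.range n, ∑ t ∈ Finset.Ico (k*T) ((k+1)*T), β t
        = ∑ t ∈ Finset.range (n*T), β t := by
      intro n
      induction n with
      | zero => simp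
      | succ n ih =>
        rw [Finset.sum_range_succ, ih, Finset.range_eq_Ico, Finset.range_eq_Ico]
        exact Finset.sum_Ico_consecutive β (Nat.zero_le _)
          (Nat.mul_le_mul_right T (Nat.le_succ n))
    have hkey : ∀ n, (T:ℝ)⁻¹ * ∑ t ∈ Finset.range (n*T), β t ≤ ∑ k ∈ Finset.range n, α k := by
      intro n
      rw [← hsum_blocks, Finset.mul_sum]
      refine Finset.sum_le_sum fun k _ => ?_
      rw [inv_mul_le_iff₀ hTpos]
      calc ∑ t ∈ Finset.Ico (k*T) ((k+1)*T), β t ≤ T * β (k*T) := hblock k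
        _ ≤ T * α k := by nlinarith [hlow k]
    have h1 : Filter.Tendsto (fun n => ∑ t ∈ Finset.range (n*T), β t)
        Filter.atTop Filter.atTop := by
      refine hdiv.comp (Filter.tendsto_atTop_mono (fun n => ?_) Filter.tendsto_id)
      exact Nat.le_mul_of_pos_right n (by omega)
    have h2 : Filter.Tendsto (fun n => (T:ℝ)⁻¹ * ∑ t ∈ Finset.range (n*T), β t)
        Filter.atTop Filter.atTop :=
      Filter.Tendsto.const_mul_atTop (by positivity) h1
    exact Filter.tendsto_atTop_mono hkey h2
  · -- square summability
    refine Summable.of_nonneg_of_le (fun k => by positivity)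
      (fun k => ?_) ((hsq.comp_injective (fun a b h => by
        exact Nat.eq_of_mul_eq_mul_right (by omega) h : Function.Injective (· * T))).mul_left ((T:ℝ)^2))
    have h1 : α k ≤ T * β (k*T) := hup k
    have h2 : 0 ≤ β (k*T) := (hβ (k*T)).1
    calc α k ^ 2 ≤ (T * β (k*T))^2 := by nlinarith [hαnn k]
      _ = (T:ℝ)^2 * (fun t => (β t)^2) ((fun a => a * T) k) := by ring_nf
end

section
/- Let (β_t) be a sequence in [0,1] satisfying β_t − β_{t+1} ≥ β_t·β_{t+1} for all t (no recency bias), and fix an epoch [kT, (k+1)T). Define α_t := β_t · ∏_{l=t+1}^{(k+1)T-1} (1 − β_l). Then the weights α_t are monotonically non-increasing in t on the epoch: α_t ≥ α_{t+1} for all t ∈ [kT, (k+1)T−1). -/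
theorem stmt4 (β : ℕ → ℝ) (hβ : ∀ t, β t ∈ Set.Icc (0:ℝ) 1)
    (hnrb : ∀ t, β t - β (t+1) ≥ β t * β (t+1))
    (T k : ℕ) (hT : 1 ≤ T) :
    ∀ t, k*T ≤ t → t + 1 < (k+1)*T →
      β (t+1) * ∏ l ∈ Finset.Ico (t+2) ((k+1)*T), (1 - β l)
        ≤ β t * ∏ l ∈ Finset.Ico (t+1) ((k+1)*T), (1 - β l) := by
  intro t _ ht
  rw [Finset.prod_eq_prod_Ico_succ_bot ht]
  have hP : (0:ℝ) ≤ ∏ l ∈ Finset.Ico (t+2) ((k+1)*T), (1 - β l) :=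
    Finset.prod_nonneg fun l _ => by linarith [(hβ l).2]
  have h1 : β (t+1) ≤ β t * (1 - β (t+1)) := by
    have := hnrb t; nlinarith
  calc β (t+1) * ∏ l ∈ Finset.Ico (t+2) ((k+1)*T), (1 - β l)
      ≤ (β t * (1 - β (t+1))) * ∏ l ∈ Finset.Ico (t+2) ((k+1)*T), (1 - β l) :=
        mul_le_mul_of_nonneg_right h1 hP
    _ = β t * ((1 - β (t+1)) * ∏ l ∈ Finset.Ico (t+1+1) ((k+1)*T), (1 - β l)) := by ring
end
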